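/- Define f_k(x) := (−1)^{k(k−1)/2} e^{−Nx/2} det[L^{(2k−1)}_{N+k−1−(i+j)}(−x)]_{i,j=0,…,k−1} and L(x) := det[L^{(2k−1)}_{N+k−1−(i+j)}(−x)]_{i,j=0,…,k−1}. Then L′(0) = (N/2)·L(0). -/

import Mathlib

open Complex Finset

/-- The generalised Laguerre polynomial, defined by its explicit sum. -/
noncomputable def genLaguerre (n : ℕ) (α : ℂ) (s : ℂ) : ℂ :=
  ∑ j ∈ Finset.range (n + 1),
    Complex.Gamma ((n : ℂ) + α + 1) /
      (Complex.Gamma ((j : ℂ) + α + 1) * ((n - j).factorial : ℂ)) * (-s) ^ j / (j.factorial : ℂ)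

lemma gamma_fact (k j : ℕ) (hk : 1 ≤ k) :
    Complex.Gamma ((j : ℂ) + ((2 * k - 1 : ℕ) : ℂ) + 1) = ((j + (2 * k - 1)).factorial : ℂ) := by
  have h : ((j : ℂ) + ((2 * k - 1 : ℕ) : ℂ) + 1) = ((j + (2 * k - 1) : ℕ) : ℂ) + 1 := by
    push_cast; ring
  rw [h, Complex.Gamma_nat_eq_factorial]

lemma entry_hasDerivAt (k m : ℕ) (hk : 1 ≤ k) (hm : 1 ≤ m) :
    HasDerivAt (fun x : ℂ => genLaguerre m ((2 * k - 1 : ℕ) : ℂ) (-x))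
      ((m : ℂ) / (2 * k) * genLaguerre m ((2 * k - 1 : ℕ) : ℂ) 0) 0 := by
  set α : ℂ := ((2 * k - 1 : ℕ) : ℂ) with hα
  set C : ℕ → ℂ := fun j => Complex.Gamma ((m : ℂ) + α + 1) /
      (Complex.Gamma ((j : ℂ) + α + 1) * ((m - j).factorial : ℂ)) with hC
  have hfun : (fun x : ℂ => genLaguerre m α (-x)) =
      fun x : ℂ => ∑ j ∈ Finset.range (m + 1), C j * x ^ j / (j.factorial : ℂ) := by
    funext x
    unfold genLaguerre
    simp [neg_neg, hC]
  have hder : HasDerivAt (fun x : ℂ => ∑ j ∈ Finset.range (m + 1), C j * x ^ j / (j.factorial : ℂ))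
      (∑ j ∈ Finset.range (m + 1), C j * ((j : ℂ) * (0:ℂ) ^ (j - 1)) / (j.factorial : ℂ)) 0 :=
    HasDerivAt.fun_sum fun j _ => (((hasDerivAt_pow j (0:ℂ)).const_mul (C j)).div_const _)
  rw [hfun]
  convert hder using 1
  -- sum reduces to the j = 1 term
  rw [Finset.sum_eq_single 1]
  · -- C 1 * (1 * 0^0) / 1! = m/(2k) * genLaguerre m α 0
    have hval : genLaguerre m α 0 = C 0 := by
      unfold genLaguerre
      rw [Finset.sum_eq_single 0]
      · simp [hC]
      · intro j _ hj
        simp [zero_pow hj]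
      · intro h; simp at h
    rw [hval]
    have h1 : Complex.Gamma (((1:ℕ) : ℂ) + α + 1) = (((2*k).factorial : ℕ) : ℂ) := by
      rw [gamma_fact k 1 hk, show 1 + (2*k-1) = 2*k from by omega]
    have h0 : Complex.Gamma (((0:ℕ) : ℂ) + α + 1) = (((2*k-1).factorial : ℕ) : ℂ) := by
      rw [gamma_fact k 0 hk, Nat.zero_add]
    simp only [hC]
    rw [h1, h0]
    have hf1 : (((2*k).factorial : ℕ) : ℂ) = (2*k : ℂ) * (((2*k-1).factorial : ℕ) : ℂ) := by
      rw [show 2*k = (2*k-1)+1 from by omega, Nat.factorial_succ]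
      push_cast [show (2*k-1)+1 = 2*k from by omega]
      ring
    have hf2 : (((m - 0).factorial : ℕ) : ℂ) = (m : ℂ) * (((m-1).factorial : ℕ) : ℂ) := by
      rw [Nat.sub_zero, show m = (m-1)+1 from by omega, Nat.factorial_succ]
      push_cast [show (m-1)+1 = m from by omega]
      ring
    rw [hf1, hf2]
    have hz1 : (((2*k-1).factorial : ℕ) : ℂ) ≠ 0 := by
      exact_mod_cast Nat.cast_ne_zero.mpr (Nat.factorial_ne_zero _)
    have hz2 : (((m-1).factorial : ℕ) : ℂ) ≠ 0 := by
      exact_mod_cast Nat.cast_ne_zero.mpr (Nat.factorial_ne_zero _)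
    have hz3 : (2*k : ℂ) ≠ 0 := by
      have : (k:ℂ) ≠ 0 := Nat.cast_ne_zero.mpr (by omega)
      simp [this]
    have hz4 : (m : ℂ) ≠ 0 := Nat.cast_ne_zero.mpr (by omega)
    simp only [pow_zero, mul_one, one_mul, Nat.factorial_one, Nat.cast_one, div_one]
    field_simp
    ring
  · intro j hj hj1
    rcases Nat.lt_or_ge j 2 with h | h
    · interval_cases j
      · simp
      · exact absurd rfl hj1
    · have : (0:ℂ) ^ (j-1) = 0 := zero_pow (by omega)
      simp [this]
  · intro h
    exact absurd (Finset.mem_range.mpr (by omega)) h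

/-- Let `L(x) := det[L^{(2k−1)}_{N+k−1−(i+j)}(−x)]_{i,j=0,…,k−1}`.  Then, for all positive
integers `k` and `N > k−1`, `L′(0) = (N/2)·L(0)`. -/
theorem laguerre_det_deriv_at_zero (N k : ℕ) (hk : 1 ≤ k) (hN : k - 1 < N) :
    deriv (fun x : ℂ =>
        Matrix.det (fun i j : Fin k =>
          genLaguerre (N + k - 1 - ((i : ℕ) + (j : ℕ))) (((2 * k - 1 : ℕ) : ℂ)) (-x))) 0 =
      ((N : ℂ) / 2) *
        Matrix.det (fun i j : Fin k =>
          genLaguerre (N + k - 1 - ((i : ℕ) + (j : ℕ))) (((2 * k - 1 : ℕ) : ℂ)) 0) := by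
  have hNk : k ≤ N := by omega
  set n := N + k - 1 with hn
  set α : ℂ := ((2 * k - 1 : ℕ) : ℂ) with hα
  set ℓ : Fin k → Fin k → ℂ := fun i j => genLaguerre (n - ((i:ℕ)+(j:ℕ))) α 0 with hℓ
  have hm : ∀ i j : Fin k, 1 ≤ n - ((i:ℕ)+(j:ℕ)) := fun i j => by
    have := i.isLt; have := j.isLt; omega
  have hle : ∀ i j : Fin k, (i:ℕ)+(j:ℕ) ≤ n := fun i j => by
    have := hm i j; omega
  -- rewrite det function via Leibniz
  have hdet : (fun x : ℂ => Matrix.det (fun i j : Fin k =>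
        genLaguerre (n - ((i:ℕ)+(j:ℕ))) α (-x))) =
      fun x : ℂ => ∑ σ : Equiv.Perm (Fin k), ((Equiv.Perm.sign σ : ℤ) : ℂ) *
          ∏ i : Fin k, genLaguerre (n - (((σ i):ℕ)+(i:ℕ))) α (-x) := by
    funext x
    exact Matrix.det_apply' _
  rw [hdet]
  -- the derivative
  have hD : HasDerivAt (fun x : ℂ => ∑ σ : Equiv.Perm (Fin k), ((Equiv.Perm.sign σ : ℤ) : ℂ) *
          ∏ i : Fin k, genLaguerre (n - (((σ i):ℕ)+(i:ℕ))) α (-x))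
      (∑ σ : Equiv.Perm (Fin k), ((Equiv.Perm.sign σ : ℤ) : ℂ) *
        ∑ i : Fin k, (∏ j ∈ Finset.univ.erase i,
            genLaguerre (n - (((σ j):ℕ)+(j:ℕ))) α (-(0:ℂ))) •
          (((n - (((σ i):ℕ)+(i:ℕ)) : ℕ):ℂ)/(2*k) * ℓ (σ i) i)) 0 :=
    HasDerivAt.fun_sum fun σ _ =>
      (HasDerivAt.fun_finsetProd fun i _ => entry_hasDerivAt k _ hk (hm (σ i) i)).const_mul _
  rw [hD.deriv]
  -- value of each determinant term is a permutation sum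
  have hdet0 : Matrix.det (fun i j : Fin k => genLaguerre (n - ((i:ℕ)+(j:ℕ))) α 0) =
      ∑ σ : Equiv.Perm (Fin k), ((Equiv.Perm.sign σ : ℤ) : ℂ) * ∏ i : Fin k, ℓ (σ i) i :=
    Matrix.det_apply' _
  rw [hdet0, Finset.mul_sum]
  refine Finset.sum_congr rfl fun σ _ => ?_
  -- per-permutation identity
  have key : ∑ i : Fin k, (∏ j ∈ Finset.univ.erase i,
        genLaguerre (n - (((σ j):ℕ)+(j:ℕ))) α (-(0:ℂ))) •
      (((n - (((σ i):ℕ)+(i:ℕ)) : ℕ):ℂ)/(2*k) * ℓ (σ i) i) =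
      ((N:ℂ)/2) * ∏ i : Fin k, ℓ (σ i) i := by
    have hstep : ∀ i : Fin k, (∏ j ∈ Finset.univ.erase i,
          genLaguerre (n - (((σ j):ℕ)+(j:ℕ))) α (-(0:ℂ))) •
        (((n - (((σ i):ℕ)+(i:ℕ)) : ℕ):ℂ)/(2*k) * ℓ (σ i) i) =
        (((n - (((σ i):ℕ)+(i:ℕ)) : ℕ):ℂ)/(2*k)) * ∏ j : Fin k, ℓ (σ j) j := by
      intro i
      have h1 : ∀ j : Fin k, genLaguerre (n - (((σ j):ℕ)+(j:ℕ))) α (-(0:ℂ)) = ℓ (σ j) j := by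
        intro j; rw [neg_zero]
      simp only [h1, smul_eq_mul]
      rw [← Finset.prod_erase_mul Finset.univ _ (Finset.mem_univ i)]
      ring
    rw [Finset.sum_congr rfl fun i _ => hstep i, ← Finset.sum_mul]
    congr 1
    -- ∑ i, (n - (σ i + i))/(2k) = N/2
    have hcast : ∀ i : Fin k, ((n - (((σ i):ℕ)+(i:ℕ)) : ℕ):ℂ) =
        (n:ℂ) - ((σ i : ℕ):ℂ) - ((i:ℕ):ℂ) := by
      intro i
      rw [Nat.cast_sub (hle (σ i) i)]
      push_cast; ring
    simp only [hcast]
    rw [← Finset.sum_div]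
    have hsum : ∑ i : Fin k, ((n:ℂ) - ((σ i : ℕ):ℂ) - ((i:ℕ):ℂ)) =
        k * (n:ℂ) - 2 * ∑ i : Fin k, ((i:ℕ):ℂ) := by
      rw [Finset.sum_sub_distrib, Finset.sum_sub_distrib, Finset.sum_const, Finset.card_univ,
        Fintype.card_fin, Equiv.sum_comp σ (fun i : Fin k => ((i:ℕ):ℂ))]
      push_cast; ring
    rw [hsum]
    have hS : (2:ℂ) * ∑ i : Fin k, ((i:ℕ):ℂ) = (k:ℂ) * ((k:ℂ) - 1) := by
      have h1 : (∑ i ∈ Finset.range k, i) * 2 = k * (k - 1) := Finset.sum_range_id_mul_two k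
      have h2 : (∑ i : Fin k, ((i:ℕ):ℂ)) = ((∑ i ∈ Finset.range k, i : ℕ) : ℂ) := by
        rw [Nat.cast_sum]
        exact Fin.sum_univ_eq_sum_range (fun i => ((i:ℕ):ℂ)) k
      rw [h2]
      have : ((k * (k-1) : ℕ) : ℂ) = (k:ℂ) * ((k:ℂ) - 1) := by
        rw [Nat.cast_mul, Nat.cast_sub hk]; push_cast; ring
      rw [← this, ← h1]; push_cast; ring
    rw [hS]
    have hnc : (n:ℂ) = (N:ℂ) + (k:ℂ) - 1 := by
      rw [hn, Nat.cast_sub (by omega)]; push_cast; ring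
    rw [hnc]
    have hk0 : (k:ℂ) ≠ 0 := Nat.cast_ne_zero.mpr (by omega)
    field_simp
    ring
  rw [key]
  ring
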